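/- Let F be a continuous distribution function, U the standard uniform distribution function, and let W₁,…,W_n be i.i.d. uniform on [0,1] with empirical distribution function U_n. Set X'_i = F⁻(W_i) (the quantile transform) with empirical distribution function F'_n. Then almost surely D_q(F'_n, F) = D_q(U_n, U) for every q ∈ ℕ₊; without continuity of F one still has D_q(F'_n, F) ≤ D_q(U_n, U) almost surely. -/

import Mathlib

open Filter Set

/-- A distribution function on ℝ: nondecreasing, right-continuous,
with limit 0 at -∞ and limit 1 at ∞. -/
def IsDistFun (F : ℝ → ℝ) : Prop :=
  Monotone F ∧ (∀ x, ContinuousWithinAt F (Set.Ici x) x) ∧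
  Tendsto F atBot (nhds 0) ∧ Tendsto F atTop (nhds 1)

/-- Extended evaluation: index 0 ↦ F(-∞)=0, index q+1 ↦ F(∞)=1,
indices 1..q ↦ F(vᵢ). -/
noncomputable def dext (q : ℕ) (F : ℝ → ℝ) (v : ℕ → ℝ) : ℕ → ℝ := fun i =>
  if i = 0 then 0 else if i = q + 1 then 1 else F (v i)

/-- r_{F,G}(v) = Σ_{i=0}^{q} min{F|_{vᵢ}^{vᵢ₊₁}, G|_{vᵢ}^{vᵢ₊₁}}. -/
noncomputable def rFG (q : ℕ) (F G : ℝ → ℝ) (v : ℕ → ℝ) : ℝ :=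
  ∑ i ∈ Finset.range (q + 1),
    min (dext q F v (i + 1) - dext q F v i) (dext q G v (i + 1) - dext q G v i)

/-- The statistic D_q(F, G) = 1 - inf over nondecreasing v ∈ ℝ^q of r_{F,G}(v). -/
noncomputable def Dq (q : ℕ) (F G : ℝ → ℝ) : ℝ :=
  1 - sInf {r | ∃ v : ℕ → ℝ, MonotoneOn v (Set.Icc 1 q) ∧ r = rFG q F G v}

open MeasureTheory ProbabilityTheory

/-- The quantile function F⁻(y) = inf{x : F(x) ≥ y}. -/
noncomputable def quantileFn (F : ℝ → ℝ) (y : ℝ) : ℝ := sInf {x | y ≤ F x}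

/-- The standard uniform distribution function U(x) = max{0, min{x, 1}}. -/
noncomputable def Ucdf : ℝ → ℝ := fun x => max 0 (min x 1)

/-- The empirical distribution function of Y₁(ω),…,Y_n(ω). -/
noncomputable def empOf {Ω : Type*} (n : ℕ) (Y : Fin n → Ω → ℝ) (ω : Ω) : ℝ → ℝ :=
  fun x => (∑ i : Fin n, if Y i ω ≤ x then (1 : ℝ) else 0) / n

section aux

variable {F : ℝ → ℝ} {w s t x : ℝ}






lemma IsDistFun.nonneg (hF : IsDistFun F) (x : ℝ) : 0 ≤ F x := by
  refine le_of_tendsto hF.2.2.1 ?_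
  filter_upwards [eventually_le_atBot x] with y hy using hF.1 hy

lemma IsDistFun.le_one (hF : IsDistFun F) (x : ℝ) : F x ≤ 1 := by
  refine ge_of_tendsto hF.2.2.2 ?_
  filter_upwards [eventually_ge_atTop x] with y hy using hF.1 hy

lemma qset_nonempty (hF : IsDistFun F) (hw : w < 1) : {x | w ≤ F x}.Nonempty := by
  have h : ∀ᶠ x in atTop, w < F x := hF.2.2.2.eventually (eventually_gt_nhds hw)
  obtain ⟨x, hx⟩ := h.exists
  exact ⟨x, hx.le⟩

lemma qset_bddBelow (hF : IsDistFun F) (hw : 0 < w) : BddBelow {x | w ≤ F x} := by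
  have h : ∀ᶠ x in atBot, F x < w := hF.2.2.1.eventually (eventually_lt_nhds hw)
  obtain ⟨x0, hx0⟩ := eventually_atBot.1 h
  refine ⟨x0, fun y hy => ?_⟩
  by_contra hlt
  push_neg at hlt
  exact absurd hy (not_le.2 (hx0 y hlt.le))

lemma le_F_quantileFn (hF : IsDistFun F) (hw0 : 0 < w) (hw1 : w < 1) :
    w ≤ F (quantileFn F w) := by
  set q := quantileFn F w with hq
  by_contra hlt
  push_neg at hlt
  have hrc := hF.2.1 q
  have hev : ∀ᶠ x in nhdsWithin q (Ici q), F x < w :=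
    hrc.eventually (eventually_lt_nhds hlt)
  obtain ⟨δ, hδ, hball⟩ := Metric.mem_nhdsWithin_iff.1 hev
  have hlb : ∀ y ∈ {x | w ≤ F x}, q + δ/2 ≤ y := by
    intro y hy
    by_contra hy2
    push_neg at hy2
    have hqy : q ≤ y := csInf_le (qset_bddBelow hF hw0) hy
    have : F y < w := by
      refine hball ⟨?_, hqy⟩
      rw [Metric.mem_ball, Real.dist_eq, abs_of_nonneg (by linarith)]
      linarith
    exact absurd hy (not_le.2 this)
  have : q + δ/2 ≤ q := le_csInf (qset_nonempty hF hw1) hlb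
  linarith

lemma quantileFn_le_iff (hF : IsDistFun F) (hw0 : 0 < w) (hw1 : w < 1) :
    quantileFn F w ≤ x ↔ w ≤ F x := by
  constructor
  · intro h
    exact (le_F_quantileFn hF hw0 hw1).trans (hF.1 h)
  · intro h
    exact csInf_le (qset_bddBelow hF hw0) h

lemma F_quantileFn_eq (hF : IsDistFun F) (hFc : Continuous F) (hw0 : 0 < w) (hw1 : w < 1) :
    F (quantileFn F w) = w := by
  refine le_antisymm ?_ (le_F_quantileFn hF hw0 hw1)
  by_contra hlt
  push_neg at hlt
  have hev : ∀ᶠ x in nhds (quantileFn F w), w < F x :=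
    (hFc.continuousAt).eventually (eventually_gt_nhds hlt)
  obtain ⟨δ, hδ, hball⟩ := Metric.eventually_nhds_iff.1 hev
  have hmem : quantileFn F w - δ/2 ∈ {x | w ≤ F x} := by
    refine le_of_lt (hball ?_)
    rw [Real.dist_eq]
    rw [abs_of_nonpos (by linarith)]
    linarith
  have h2 := csInf_le (qset_bddBelow hF hw0) hmem
  rw [quantileFn] at *
  linarith

lemma quantileFn_mono (hF : IsDistFun F) (hs0 : 0 < s) (ht1 : t < 1) (hst : s ≤ t) :
    quantileFn F s ≤ quantileFn F t := by
  refine csInf_le_csInf (qset_bddBelow hF hs0) (qset_nonempty hF ht1) ?_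
  intro y hy
  exact hst.trans hy





lemma dext_congr {q : ℕ} {A B : ℝ → ℝ} {v w : ℕ → ℝ}
    (h : ∀ i, 1 ≤ i → i ≤ q → A (v i) = B (w i)) {i : ℕ} (hi : i ≤ q + 1) :
    dext q A v i = dext q B w i := by
  unfold dext
  split_ifs with h0 h1
  · rfl
  · rfl
  · exact h i (Nat.one_le_iff_ne_zero.2 h0) (by omega)

lemma rFG_congr {q : ℕ} {A A' B B' : ℝ → ℝ} {v w : ℕ → ℝ}
    (hA : ∀ i, 1 ≤ i → i ≤ q → A (v i) = A' (w i))
    (hB : ∀ i, 1 ≤ i → i ≤ q → B (v i) = B' (w i)) :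
    rFG q A B v = rFG q A' B' w := by
  unfold rFG
  refine Finset.sum_congr rfl fun i hi => ?_
  have hiq : i ≤ q := by have := Finset.mem_range.1 hi; omega
  rw [dext_congr hA (by omega), dext_congr hA (by omega : i ≤ q + 1),
    dext_congr hB (by omega), dext_congr hB (by omega : i ≤ q + 1)]

lemma dext_inc_nonneg {q : ℕ} {A : ℝ → ℝ} {v : ℕ → ℝ}
    (hA : Monotone A) (hA0 : ∀ x, 0 ≤ A x) (hA1 : ∀ x, A x ≤ 1)
    (hv : MonotoneOn v (Set.Icc 1 q)) {i : ℕ} (hi : i ≤ q) :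
    0 ≤ dext q A v (i + 1) - dext q A v i := by
  unfold dext
  rcases Nat.eq_zero_or_pos i with h0 | h0
  · subst h0
    simp only [if_pos rfl]
    split_ifs with h1 h2 <;> simp_all [hA0]
  · have hi0 : i ≠ 0 := Nat.pos_iff_ne_zero.1 h0
    have hi10 : i + 1 ≠ 0 := by omega
    rw [if_neg hi0, if_neg hi10, if_neg (by omega : i ≠ q + 1)]
    split_ifs with h1
    · linarith [hA1 (v i)]
    · have hiq : i + 1 ≤ q := by omega
      have := hv (Set.mem_Icc.2 ⟨h0, by omega⟩) (Set.mem_Icc.2 ⟨by omega, hiq⟩)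
        (by omega : i ≤ i + 1)
      linarith [hA this]

lemma rFG_nonneg {q : ℕ} {A B : ℝ → ℝ} {v : ℕ → ℝ}
    (hA : Monotone A) (hA0 : ∀ x, 0 ≤ A x) (hA1 : ∀ x, A x ≤ 1)
    (hB : Monotone B) (hB0 : ∀ x, 0 ≤ B x) (hB1 : ∀ x, B x ≤ 1)
    (hv : MonotoneOn v (Set.Icc 1 q)) : 0 ≤ rFG q A B v := by
  refine Finset.sum_nonneg fun i hi => ?_
  have hiq : i ≤ q := by
    have := Finset.mem_range.1 hi; omega
  exact le_min (dext_inc_nonneg hA hA0 hA1 hv hiq) (dext_inc_nonneg hB hB0 hB1 hv hiq)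

lemma rFG_perturb {q : ℕ} {A B : ℝ → ℝ} {v v' : ℕ → ℝ} {ε : ℝ} (hε : 0 ≤ ε)
    (h1 : ∀ i, 1 ≤ i → i ≤ q → A (v' i) = A (v i))
    (h2 : ∀ i, 1 ≤ i → i ≤ q → |B (v' i) - B (v i)| ≤ ε) :
    rFG q A B v' ≤ rFG q A B v + (q + 1) * (2 * ε) := by
  have hdA : ∀ i, i ≤ q + 1 → dext q A v' i = dext q A v i := fun i hi => dext_congr h1 hi
  have hdB : ∀ i, i ≤ q + 1 → |dext q B v' i - dext q B v i| ≤ ε := by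
    intro i hi
    unfold dext
    split_ifs with h0 hq1
    · simpa using hε
    · simpa using hε
    · exact h2 i (Nat.one_le_iff_ne_zero.2 h0) (by omega)
  have : rFG q A B v + (q+1) * (2*ε) =
      ∑ i ∈ Finset.range (q + 1),
        (min (dext q A v (i + 1) - dext q A v i) (dext q B v (i + 1) - dext q B v i) + 2*ε) := by
    rw [Finset.sum_add_distrib, rFG]
    simp only [Finset.sum_const, Finset.card_range, nsmul_eq_mul]
    push_cast
    ring
  rw [this, rFG]
  refine Finset.sum_le_sum fun i hi => ?_
  have hiq : i ≤ q := by have := Finset.mem_range.1 hi; omega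
  rw [hdA (i+1) (by omega), hdA i (by omega)]
  have hb1 := abs_le.1 (hdB (i+1) (by omega))
  have hb2 := abs_le.1 (hdB i (by omega))
  have : dext q B v' (i+1) - dext q B v' i ≤ (dext q B v (i+1) - dext q B v i) + 2*ε := by
    linarith [hb1.2, hb2.1]
  calc min (dext q A v (i + 1) - dext q A v i) (dext q B v' (i + 1) - dext q B v' i)
      ≤ min ((dext q A v (i + 1) - dext q A v i) + 2*ε)
          ((dext q B v (i + 1) - dext q B v i) + 2*ε) :=
        min_le_min (by linarith) this
    _ = min (dext q A v (i + 1) - dext q A v i) (dext q B v (i + 1) - dext q B v i) + 2*ε := by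
        rw [← min_add_add_right]




noncomputable def empV (n : ℕ) (w : Fin n → ℝ) : ℝ → ℝ :=
  fun x => (∑ i : Fin n, if w i ≤ x then (1 : ℝ) else 0) / n

lemma Ucdf_mono : Monotone Ucdf := fun a b hab =>
  max_le_max le_rfl (min_le_min hab le_rfl)

lemma Ucdf_nonneg (x : ℝ) : 0 ≤ Ucdf x := le_max_left _ _

lemma Ucdf_le_one (x : ℝ) : Ucdf x ≤ 1 := max_le zero_le_one (min_le_right _ _)

lemma Ucdf_eq {t : ℝ} (h0 : 0 ≤ t) (h1 : t ≤ 1) : Ucdf t = t := by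
  unfold Ucdf
  rw [min_eq_left h1, max_eq_right h0]

lemma empV_mono {n : ℕ} {w : Fin n → ℝ} : Monotone (empV n w) := by
  intro a b hab
  unfold empV
  have : ∀ i : Fin n, (if w i ≤ a then (1:ℝ) else 0) ≤ (if w i ≤ b then (1:ℝ) else 0) := by
    intro i
    split_ifs with h1 h2
    · exact le_rfl
    · exact absurd (h1.trans hab) h2
    · exact zero_le_one
    · exact le_rfl
  have hsum := Finset.sum_le_sum fun i (_ : i ∈ Finset.univ) => this i
  gcongr


lemma empV_nonneg {n : ℕ} {w : Fin n → ℝ} (x : ℝ) : 0 ≤ empV n w x := by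
  unfold empV
  apply div_nonneg _ (Nat.cast_nonneg n)
  apply Finset.sum_nonneg
  intro i _
  split_ifs <;> norm_num

lemma empV_le_one {n : ℕ} {w : Fin n → ℝ} (hn : 0 < n) (x : ℝ) : empV n w x ≤ 1 := by
  unfold empV
  rw [div_le_one (by exact_mod_cast hn)]
  calc (∑ i : Fin n, if w i ≤ x then (1:ℝ) else 0) ≤ ∑ _i : Fin n, (1:ℝ) := by
        refine Finset.sum_le_sum fun i _ => ?_
        split_ifs <;> norm_num
    _ = n := by simp

noncomputable def clampE (ε : ℝ) (t : ℝ) : ℝ := max ε (min t (1 - ε))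

lemma clampE_mono (ε : ℝ) : Monotone (clampE ε) := fun _ _ hab =>
  max_le_max le_rfl (min_le_min hab le_rfl)

lemma clampE_mem {ε t : ℝ} (hε : 0 < ε) (hε2 : ε ≤ 1/2) :
    clampE ε t ∈ Set.Icc ε (1 - ε) := by
  constructor
  · exact le_max_left _ _
  · exact max_le (by linarith) (min_le_right _ _)

lemma empV_clampE {n : ℕ} {Wv : Fin n → ℝ} {ε t : ℝ}
    (h : ∀ j, ε < Wv j ∧ Wv j < 1 - ε) :
    empV n Wv (clampE ε t) = empV n Wv t := by
  unfold empV
  congr 1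
  refine Finset.sum_congr rfl fun j _ => ?_
  have h1 := (h j).1
  have h2 := (h j).2
  congr 1
  unfold clampE
  by_cases hle : Wv j ≤ t
  · simp only [eq_iff_iff, iff_true, hle]
    calc Wv j ≤ min t (1 - ε) := le_min hle h2.le
      _ ≤ max ε (min t (1 - ε)) := le_max_right _ _
  · simp only [eq_iff_iff, iff_false, hle]
    intro hc
    rcases le_or_gt (min t (1 - ε)) ε with hm | hm
    · rw [max_eq_left hm] at hc
      linarith
    · rw [max_eq_right hm.le] at hc
      exact hle ((le_min_iff.1 hc).1)

lemma Ucdf_clampE {ε t : ℝ} (hε : 0 < ε) (hε2 : ε ≤ 1/2) :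
    |Ucdf (clampE ε t) - Ucdf t| ≤ ε := by
  have hmem := clampE_mem (t := t) hε hε2
  have hc1 : Ucdf (clampE ε t) = clampE ε t :=
    Ucdf_eq (by linarith [hmem.1]) (by linarith [hmem.2])
  rw [hc1, abs_le]
  unfold clampE Ucdf at *
  rcases le_total t ε with h1 | h1
  · rw [min_eq_left (by linarith : t ≤ 1 - ε), max_eq_left (by linarith : t ≤ ε)]
    rcases le_total t 0 with h2 | h2
    · rw [min_eq_left (by linarith : t ≤ 1), max_eq_left (by linarith : t ≤ 0)]
      constructor <;> linarith
    · rw [min_eq_left (by linarith : t ≤ 1), max_eq_right h2]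
      constructor <;> linarith
  · rcases le_total (1 - ε) t with h3 | h3
    · rw [min_eq_right h3, max_eq_right (by linarith : ε ≤ 1 - ε)]
      rcases le_total 1 t with h4 | h4
      · rw [min_eq_right h4, max_eq_right (by linarith : (0:ℝ) ≤ 1)]
        constructor <;> linarith
      · rw [min_eq_left h4, max_eq_right (by linarith : 0 ≤ t)]
        constructor <;> linarith
    · rw [min_eq_left (by linarith : t ≤ 1 - ε), max_eq_right h1,
        min_eq_left (by linarith : t ≤ 1), max_eq_right (by linarith : 0 ≤ t)]
      constructor <;> linarith


/-- The key pointwise identity F'_n = U_n ∘ F. -/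
lemma empV_quantile_comp {n : ℕ} {F : ℝ → ℝ} (hF : IsDistFun F)
    {Wv : Fin n → ℝ} (hWv : ∀ i, Wv i ∈ Set.Ioo (0:ℝ) 1) (x : ℝ) :
    empV n (fun i => quantileFn F (Wv i)) x = empV n Wv (F x) := by
  unfold empV
  congr 1
  refine Finset.sum_congr rfl fun i _ => ?_
  congr 1
  rw [eq_iff_iff]
  exact quantileFn_le_iff hF (hWv i).1 (hWv i).2

lemma Dq_le_main {n q : ℕ} (hn : 0 < n) {F : ℝ → ℝ} (hF : IsDistFun F)
    {Wv : Fin n → ℝ} (hWv : ∀ i, Wv i ∈ Set.Ioo (0:ℝ) 1) :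
    Dq q (empV n (fun i => quantileFn F (Wv i))) F ≤ Dq q (empV n Wv) Ucdf := by
  set Fq := empV n (fun i => quantileFn F (Wv i)) with hFq
  set A := {r | ∃ v : ℕ → ℝ, MonotoneOn v (Set.Icc 1 q) ∧ r = rFG q Fq F v} with hA
  set B := {r | ∃ v : ℕ → ℝ, MonotoneOn v (Set.Icc 1 q) ∧ r = rFG q (empV n Wv) Ucdf v} with hB
  have hAB : A ⊆ B := by
    rintro r ⟨v, hv, rfl⟩
    refine ⟨fun i => F (v i), fun i hi j hj hij => hF.1 (hv hi hj hij), ?_⟩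
    refine rFG_congr (fun i _ _ => ?_) (fun i _ _ => ?_)
    · exact empV_quantile_comp hF hWv (v i)
    · exact (Ucdf_eq (hF.nonneg (v i)) (hF.le_one (v i))).symm
  have hBbdd : BddBelow B := by
    refine ⟨0, ?_⟩
    rintro r ⟨v, hv, rfl⟩
    exact rFG_nonneg empV_mono empV_nonneg (empV_le_one hn) Ucdf_mono Ucdf_nonneg
      Ucdf_le_one hv
  have hAne : A.Nonempty :=
    ⟨rFG q Fq F (fun _ => 0), fun _ => 0, fun _ _ _ _ _ => le_rfl, rfl⟩
  have := csInf_le_csInf hBbdd hAne hAB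
  unfold Dq
  linarith

lemma Dq_eq_main {n q : ℕ} (hn : 0 < n) {F : ℝ → ℝ} (hF : IsDistFun F)
    (hFc : Continuous F)
    {Wv : Fin n → ℝ} (hWv : ∀ i, Wv i ∈ Set.Ioo (0:ℝ) 1) :
    Dq q (empV n (fun i => quantileFn F (Wv i))) F = Dq q (empV n Wv) Ucdf := by
  refine le_antisymm (Dq_le_main hn hF hWv) ?_
  set Fq := empV n (fun i => quantileFn F (Wv i)) with hFq
  set A := {r | ∃ v : ℕ → ℝ, MonotoneOn v (Set.Icc 1 q) ∧ r = rFG q Fq F v} with hA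
  set B := {r | ∃ v : ℕ → ℝ, MonotoneOn v (Set.Icc 1 q) ∧ r = rFG q (empV n Wv) Ucdf v} with hB
  have hAbdd : BddBelow A := by
    refine ⟨0, ?_⟩
    rintro r ⟨v, hv, rfl⟩
    refine rFG_nonneg empV_mono empV_nonneg (empV_le_one hn) hF.1 hF.nonneg hF.le_one hv
  have hBne : B.Nonempty :=
    ⟨rFG q (empV n Wv) Ucdf (fun _ => 0), fun _ => 0, fun _ _ _ _ _ => le_rfl, rfl⟩
  have key : sInf A ≤ sInf B := by
    refine le_csInf hBne ?_
    rintro b ⟨w, hw, rfl⟩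
    refine le_of_forall_pos_le_add fun ε hε => ?_
    -- choose ε0
    have hne : (Finset.univ : Finset (Fin n)).Nonempty := by
      rwa [Finset.univ_nonempty_iff, ← Fin.pos_iff_nonempty]
    set m : ℝ := Finset.univ.inf' hne (fun j => min (Wv j) (1 - Wv j)) with hm
    have hmpos : 0 < m := by
      rw [hm, Finset.lt_inf'_iff]
      intro j _
      exact lt_min (hWv j).1 (by linarith [(hWv j).2])
    set ε0 : ℝ := min (ε/(2*(q+1))) (min (1/2) (m/2)) with hε0
    have hqpos : (0:ℝ) < 2*(q+1) := by positivity
    have hε0pos : 0 < ε0 := by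
      refine lt_min (by positivity) (lt_min (by norm_num) (by linarith))
    have hε0half : ε0 ≤ 1/2 := (min_le_right _ _).trans (min_le_left _ _)
    have hε0m : ε0 ≤ m/2 := (min_le_right _ _).trans (min_le_right _ _)
    have hWj : ∀ j, ε0 < Wv j ∧ Wv j < 1 - ε0 := by
      intro j
      have h1 : m ≤ min (Wv j) (1 - Wv j) :=
        Finset.inf'_le _ (Finset.mem_univ j)
      have h2 := (le_min_iff.1 h1).1
      have h3 := (le_min_iff.1 h1).2
      constructor <;> [linarith; linarith]
    set wt : ℕ → ℝ := fun i => clampE ε0 (w i) with hwt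
    have hwtmem : ∀ i, wt i ∈ Set.Icc ε0 (1 - ε0) := fun i => clampE_mem hε0pos hε0half
    have hwt0 : ∀ i, 0 < wt i := fun i => lt_of_lt_of_le hε0pos (hwtmem i).1
    have hwt1 : ∀ i, wt i < 1 := fun i => lt_of_le_of_lt (hwtmem i).2 (by linarith)
    set v : ℕ → ℝ := fun i => quantileFn F (wt i) with hv
    have hvmono : MonotoneOn v (Set.Icc 1 q) := by
      intro i hi j hj hij
      exact quantileFn_mono hF (hwt0 i) (hwt1 j) (clampE_mono ε0 (hw hi hj hij))
    have hFv : ∀ i, F (v i) = wt i := fun i =>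
      F_quantileFn_eq hF hFc (hwt0 i) (hwt1 i)
    have hstep1 : rFG q Fq F v = rFG q (empV n Wv) Ucdf wt := by
      refine rFG_congr (fun i _ _ => ?_) (fun i _ _ => ?_)
      · rw [hFq, empV_quantile_comp hF hWv (v i), hFv i]
      · rw [hFv i, Ucdf_eq (hwt0 i).le (hwt1 i).le]
    have hstep2 : rFG q (empV n Wv) Ucdf wt
        ≤ rFG q (empV n Wv) Ucdf w + (q + 1) * (2 * ε0) := by
      refine rFG_perturb hε0pos.le (fun i _ _ => ?_) (fun i _ _ => ?_)
      · exact empV_clampE hWj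
      · exact Ucdf_clampE hε0pos hε0half
    have hmemA : rFG q Fq F v ∈ A := ⟨v, hvmono, rfl⟩
    have hεbound : (q + 1 : ℝ) * (2 * ε0) ≤ ε := by
      have : ε0 ≤ ε/(2*(q+1)) := min_le_left _ _
      have hq1 : (0:ℝ) < (q:ℝ) + 1 := by positivity
      calc (q + 1 : ℝ) * (2 * ε0) ≤ (q + 1 : ℝ) * (2 * (ε/(2*(q+1)))) := by
            apply mul_le_mul_of_nonneg_left _ hq1.le
            linarith
        _ = ε := by field_simp
    calc sInf A ≤ rFG q Fq F v := csInf_le hAbdd hmemA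
      _ ≤ rFG q (empV n Wv) Ucdf w + ε := by linarith [hstep1 ▸ hstep2]
  unfold Dq
  linarith

end aux

/-- With W₁,…,W_n i.i.d. standard uniform and X'ᵢ = F⁻(Wᵢ), almost surely
D_q(F'_n, F) ≤ D_q(U_n, U) for every q ≥ 1; if F is continuous, almost surely
D_q(F'_n, F) = D_q(U_n, U) for every q ≥ 1. -/
theorem quantile_transform_Dq
    {Ω : Type*} [MeasurableSpace Ω] (P : Measure Ω) [IsProbabilityMeasure P]
    (n : ℕ) (hn : 0 < n) (W : Fin n → Ω → ℝ) (hmeas : ∀ i, Measurable (W i))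
    (hindep : iIndepFun W P)
    (hunif : ∀ i, Measure.map (W i) P = volume.restrict (Set.Icc 0 1))
    (F : ℝ → ℝ) (hF : IsDistFun F) :
    (∀ᵐ ω ∂P, ∀ q : ℕ, 1 ≤ q →
        Dq q (empOf n (fun i ω' => quantileFn F (W i ω')) ω) F
          ≤ Dq q (empOf n W ω) Ucdf) ∧
    (Continuous F → ∀ᵐ ω ∂P, ∀ q : ℕ, 1 ≤ q →
        Dq q (empOf n (fun i ω' => quantileFn F (W i ω')) ω) F
          = Dq q (empOf n W ω) Ucdf) := by
  have hae : ∀ᵐ ω ∂P, ∀ i, W i ω ∈ Set.Ioo (0:ℝ) 1 := by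
    rw [ae_all_iff]
    intro i
    rw [ae_iff]
    have hcompl : {ω | ¬ W i ω ∈ Set.Ioo (0:ℝ) 1} = (W i) ⁻¹' (Set.Ioo (0:ℝ) 1)ᶜ := rfl
    rw [hcompl, ← Measure.map_apply (hmeas i) measurableSet_Ioo.compl, hunif i,
      Measure.restrict_apply measurableSet_Ioo.compl]
    have hsub : (Set.Ioo (0:ℝ) 1)ᶜ ∩ Set.Icc 0 1 ⊆ ({0, 1} : Set ℝ) := by
      rintro x ⟨hx1, hx2⟩
      simp only [Set.mem_compl_iff, Set.mem_Ioo, not_and_or, not_lt] at hx1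
      rcases hx1 with h | h
      · left; linarith [hx2.1]
      · right
        simp only [Set.mem_singleton_iff]
        linarith [hx2.2]
    exact measure_mono_null hsub (Set.Finite.measure_zero (by exact (Set.finite_singleton 1).insert 0) volume)
  have hemp : ∀ (ω : Ω) (Y : Fin n → Ω → ℝ), empOf n Y ω = empV n (fun i => Y i ω) :=
    fun ω Y => rfl
  constructor
  · filter_upwards [hae] with ω hω q _
    rw [hemp ω, hemp ω]
    exact Dq_le_main hn hF hω
  · intro hFc
    filter_upwards [hae] with ω hω q _
    rw [hemp ω, hemp ω]
    exact Dq_eq_main hn hF hFc hω
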